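/- Let n be a positive integer, λ_1, …, λ_n > 0, β_1, …, β_n > 0, and p_1, …, p_n > 0 with p_1 + ⋯ + p_n = 1, and let f(t) = Σ_{i=1}^n p_i h(t; λ_i, β_i) for t ∈ (0,1). Then: (1) if β_i > 1 for all i, then f(t) → 0 as t → 0+; (2) if β_i ≥ 1 for all i and β_i = 1 for at least one i, then f(t) → Σ_{i : β_i = 1} p_i λ_i as t → 0+; (3) if β_i < 1 for at least one i, then f(t) → +∞ as t → 0+. -/

import Mathlib

open Filter Set Real

lemma rpow_tendsto_zero' {c : ℝ} (hc : 0 < c) :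
    Tendsto (fun t : ℝ => t ^ c) (nhdsWithin 0 (Set.Ioi 0)) (nhds 0) := by
  have h := (Real.continuousAt_rpow_const 0 c (Or.inr hc.le)).tendsto
  rw [Real.zero_rpow hc.ne'] at h
  exact h.mono_left nhdsWithin_le_nhds

lemma rpow_tendsto_atTop' {c : ℝ} (hc : c < 0) :
    Tendsto (fun t : ℝ => t ^ c) (nhdsWithin 0 (Set.Ioi 0)) atTop := by
  have h0 : Tendsto (fun t : ℝ => t ^ (-c)) (nhdsWithin 0 (Set.Ioi 0))
      (nhdsWithin 0 (Set.Ioi 0)) := by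
    refine tendsto_nhdsWithin_of_tendsto_nhds_of_eventually_within _
      (rpow_tendsto_zero' (by linarith)) ?_
    filter_upwards [self_mem_nhdsWithin] with t ht
    exact Real.rpow_pos_of_pos ht _
  refine h0.inv_tendsto_nhdsGT_zero.congr' ?_
  filter_upwards [self_mem_nhdsWithin] with t (ht : 0 < t)
  simp [← Real.rpow_neg ht.le]

lemma aux_AE' (b l : ℝ) (hb : 0 < b) :
    Tendsto (fun t : ℝ => (1 - t) ^ (-(b+1)) * Real.exp (-l * (t/(1-t)) ^ b))
      (nhdsWithin 0 (Set.Ioi 0)) (nhds 1) := by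
  have h : ContinuousAt (fun t : ℝ => (1 - t) ^ (-(b+1)) * Real.exp (-l * (t/(1-t)) ^ b)) 0 := by
    have h1 : ContinuousAt (fun t : ℝ => (1 - t) ^ (-(b+1))) 0 :=
      (continuousAt_const.sub continuousAt_id).rpow_const (by norm_num)
    have h2 : ContinuousAt (fun t : ℝ => t / (1 - t)) 0 :=
      continuousAt_id.div (continuousAt_const.sub continuousAt_id) (by norm_num)
    have h3 : ContinuousAt (fun t : ℝ => (t / (1 - t)) ^ b) 0 :=
      h2.rpow_const (Or.inr hb.le)
    exact h1.mul (Real.continuous_exp.continuousAt.comp (continuousAt_const.mul h3))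
  have h2 := (h.tendsto.mono_left (nhdsWithin_le_nhds (s := Set.Ioi 0)))
  simpa [Real.zero_rpow hb.ne'] using h2

-- per-term tendsto: to (if b = 1 then p*l else 0) when 1 ≤ b
lemma term_tendsto' (l b pp : ℝ) (hb1 : 1 ≤ b) :
    Tendsto (fun t : ℝ => pp * (l * b * t ^ (b - 1) *
        (1 - t) ^ (-(b + 1)) * Real.exp (-l * (t / (1 - t)) ^ b)))
      (nhdsWithin 0 (Set.Ioi 0)) (nhds (if b = 1 then pp * l else 0)) := by
  have hb : 0 < b := lt_of_lt_of_le one_pos hb1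
  have hAE := aux_AE' b l hb
  rcases eq_or_lt_of_le hb1 with h1 | h1
  · -- b = 1
    have hX : ∀ t : ℝ, (t : ℝ) ^ (b - 1) = 1 := by
      intro t; rw [← h1]; simp
    simp only [if_pos h1.symm]
    have heq : (pp * l * b) * 1 = pp * l := by rw [← h1]; ring
    rw [← heq]
    refine (hAE.const_mul (pp * l * b)).congr (fun t => ?_)
    rw [hX t]; ring
  · -- 1 < b
    simp only [if_neg (by linarith : b ≠ 1)]
    have hX := rpow_tendsto_zero' (c := b - 1) (by linarith)
    have : Tendsto (fun t : ℝ => (pp * l * b) * (t ^ (b - 1) *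
        ((1 - t) ^ (-(b+1)) * Real.exp (-l * (t/(1-t)) ^ b))))
        (nhdsWithin 0 (Set.Ioi 0)) (nhds ((pp * l * b) * (0 * 1))) :=
      (hX.mul hAE).const_mul _
    simpa using this.congr (fun t => by ring)

open scoped Classical in
theorem discrete_kies_mixture_left_endpoint
    (n : ℕ) (hn : 0 < n) (lam beta p : Fin n → ℝ)
    (hlam : ∀ i, 0 < lam i) (hbeta : ∀ i, 0 < beta i) (hp : ∀ i, 0 < p i)
    (hsum : ∑ i, p i = 1)
    (f : ℝ → ℝ)
    (hf : ∀ t, f t = ∑ i, p i * (lam i * beta i * t ^ (beta i - 1) *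
        (1 - t) ^ (-(beta i + 1)) * Real.exp (-(lam i) * (t / (1 - t)) ^ (beta i)))) :
    ((∀ i, 1 < beta i) → Tendsto f (nhdsWithin 0 (Set.Ioi 0)) (nhds 0)) ∧
    ((∀ i, 1 ≤ beta i) → (∃ i, beta i = 1) →
        Tendsto f (nhdsWithin 0 (Set.Ioi 0))
          (nhds (∑ i ∈ Finset.univ.filter (fun i => beta i = 1), p i * lam i))) ∧
    ((∃ i, beta i < 1) → Tendsto f (nhdsWithin 0 (Set.Ioi 0)) atTop) := by
  have hfun : f = fun t => ∑ i, p i * (lam i * beta i * t ^ (beta i - 1) *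
        (1 - t) ^ (-(beta i + 1)) * Real.exp (-(lam i) * (t / (1 - t)) ^ (beta i))) :=
    funext hf
  have hsum_tendsto : ∀ (h1 : ∀ i, 1 ≤ beta i),
      Tendsto f (nhdsWithin 0 (Set.Ioi 0))
        (nhds (∑ i, if beta i = 1 then p i * lam i else 0)) := by
    intro h1
    rw [hfun]
    exact tendsto_finset_sum _ (fun i _ => term_tendsto' (lam i) (beta i) (p i) (h1 i))
  refine ⟨?_, ?_, ?_⟩
  · intro hall
    have := hsum_tendsto (fun i => (hall i).le)
    have hz : (∑ i, if beta i = 1 then p i * lam i else 0) = 0 := by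
      apply Finset.sum_eq_zero
      intro i _
      rw [if_neg (ne_of_gt (hall i))]
    rwa [hz] at this
  · intro h1 _
    have := hsum_tendsto h1
    rwa [← Finset.sum_filter] at this
  · rintro ⟨j, hj⟩
    have hAE := aux_AE' (beta j) (lam j) (hbeta j)
    have hX := rpow_tendsto_atTop' (c := beta j - 1) (by linarith)
    have hterm : Tendsto (fun t : ℝ => p j * (lam j * beta j * t ^ (beta j - 1) *
        (1 - t) ^ (-(beta j + 1)) * Real.exp (-(lam j) * (t / (1 - t)) ^ (beta j))))
        (nhdsWithin 0 (Set.Ioi 0)) atTop := by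
      have hc : 0 < p j * lam j * beta j :=
        mul_pos (mul_pos (hp j) (hlam j)) (hbeta j)
      have h2 : Tendsto (fun t : ℝ => t ^ (beta j - 1) *
          ((1 - t) ^ (-(beta j + 1)) * Real.exp (-(lam j) * (t / (1 - t)) ^ (beta j))))
          (nhdsWithin 0 (Set.Ioi 0)) atTop := hX.atTop_mul_pos one_pos hAE
      have h3 := h2.const_mul_atTop hc
      exact h3.congr (fun t => by ring)
    refine tendsto_atTop_mono' _ ?_ hterm
    filter_upwards [Ioo_mem_nhdsGT_of_mem (Set.left_mem_Ico.mpr one_pos)] with t ht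
    rw [hf t]
    refine Finset.single_le_sum (f := fun i => p i * (lam i * beta i * t ^ (beta i - 1) *
        (1 - t) ^ (-(beta i + 1)) * Real.exp (-(lam i) * (t / (1 - t)) ^ (beta i))))
      (fun i _ => ?_) (Finset.mem_univ j)
    have h1t : (0:ℝ) < 1 - t := by linarith [ht.2]
    have h0t : (0:ℝ) < t := ht.1
    have := hp i; have := hlam i; have := hbeta i
    positivity
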